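/- For every f : {-1,1}^n → ℝ and α ∈ (0,1], ‖T_α f‖_1 ≥ α^n ‖f‖_1, where T_α is the noise operator multiplying the Fourier coefficient f̂(S) by α^{|S|}, and ‖·‖_1 is the L1 norm with respect to the uniform measure on {-1,1}^n. -/

import Mathlib

open Finset

/-- The Fourier character χ_S evaluated at a point of the Boolean cube
(coordinates encoded by `Bool`, with `true ↦ 1` and `false ↦ -1`). -/
noncomputable def char {n : ℕ} (S : Finset (Fin n)) (x : Fin n → Bool) : ℝ :=
  ∏ i ∈ S, (if x i then (1 : ℝ) else -1)

/-- The multilinear polynomial with Fourier coefficients `c`, evaluated on the cube. -/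
noncomputable def eval' {n : ℕ} (c : Finset (Fin n) → ℝ) (x : Fin n → Bool) : ℝ :=
  ∑ S : Finset (Fin n), c S * char S x

/-- Flip the i-th coordinate. -/
def flipAt {n : ℕ} (x : Fin n → Bool) (i : Fin n) : Fin n → Bool :=
  Function.update x i (!(x i))

/-- Expectation over the uniform measure on the cube. -/
noncomputable def Ex {n : ℕ} (g : (Fin n → Bool) → ℝ) : ℝ :=
  (∑ x : Fin n → Bool, g x) / 2 ^ n

noncomputable def sgn (b : Bool) : ℝ := if b then 1 else -1

lemma sum_pi_prod {n : ℕ} (g : Fin n → Bool → ℝ) :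
    ∑ y : Fin n → Bool, ∏ i, g i (y i) = ∏ i, (g i true + g i false) := by
  rw [show (∏ i, (g i true + g i false)) = ∏ i, ∑ b : Bool, g i b by
    simp [Fintype.sum_bool, add_comm]]
  rw [Finset.prod_univ_sum, Fintype.piFinset_univ]

lemma filter_mem_univ {n : ℕ} (S : Finset (Fin n)) :
    (univ : Finset (Fin n)).filter (· ∈ S) = S := by simp

lemma char_eq {n : ℕ} (S : Finset (Fin n)) (y : Fin n → Bool) :
    char S y = ∏ i, (if i ∈ S then sgn (y i) else 1) := by
  rw [← Finset.prod_filter, filter_mem_univ, char]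
  exact Finset.prod_congr rfl fun i _ => by simp [sgn]

lemma kernel_char {n : ℕ} (β : ℝ) (S : Finset (Fin n)) (x : Fin n → Bool) :
    ∑ y : Fin n → Bool, char S y * ∏ i, ((1 + β * sgn (x i) * sgn (y i)) / 2)
      = β ^ S.card * char S x := by
  have key : ∀ y : Fin n → Bool,
      char S y * ∏ i, ((1 + β * sgn (x i) * sgn (y i)) / 2)
        = ∏ i, ((if i ∈ S then sgn (y i) else 1) * ((1 + β * sgn (x i) * sgn (y i)) / 2)) := by
    intro y
    rw [char_eq, ← Finset.prod_mul_distrib]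
  simp_rw [key]
  rw [sum_pi_prod (fun i b => (if i ∈ S then sgn b else 1) * ((1 + β * sgn (x i) * sgn b) / 2))]
  have h2 : ∀ i : Fin n,
      ((if i ∈ S then sgn true else 1) * ((1 + β * sgn (x i) * sgn true) / 2)
        + (if i ∈ S then sgn false else 1) * ((1 + β * sgn (x i) * sgn false) / 2))
      = (if i ∈ S then β * sgn (x i) else 1) := by
    intro i
    by_cases hi : i ∈ S <;> cases hxi : x i <;> simp [sgn, hi, hxi] <;> ring
  simp only [h2]
  rw [char_eq, ← Finset.prod_filter, ← Finset.prod_filter, filter_mem_univ,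
    Finset.prod_mul_distrib, Finset.prod_const]

lemma reproduce {n : ℕ} (c : Finset (Fin n) → ℝ) (α : ℝ) (hα : α ≠ 0)
    (x : Fin n → Bool) :
    eval' c x = ∑ y : Fin n → Bool,
      (∏ i, ((1 + α⁻¹ * sgn (x i) * sgn (y i)) / 2))
        * eval' (fun S => α ^ S.card * c S) y := by
  unfold eval'
  simp_rw [Finset.mul_sum]
  rw [Finset.sum_comm]
  refine Finset.sum_congr rfl fun S _ => ?_
  have h : ∑ y : Fin n → Bool,
      (∏ i, ((1 + α⁻¹ * sgn (x i) * sgn (y i)) / 2)) * (α ^ S.card * c S * char S y)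
      = (α ^ S.card * c S) * ∑ y : Fin n → Bool,
          char S y * ∏ i, ((1 + α⁻¹ * sgn (x i) * sgn (y i)) / 2) := by
    rw [Finset.mul_sum]
    exact Finset.sum_congr rfl fun y _ => by ring
  rw [h, kernel_char]
  field_simp
  rw [mul_assoc _ (α ^ _), ← mul_pow, mul_one_div_cancel hα, one_pow, mul_one]

lemma habs2 (β s : ℝ) (hβ : 1 ≤ β) (hs : s = 1 ∨ s = -1) :
    |(1 + β * 1 * s) / 2| + |(1 + β * -1 * s) / 2| = β := by
  rcases hs with h | h <;> subst h
  · rw [show (1 + β * 1 * 1) / 2 = (1 + β) / 2 by ring,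
      show (1 + β * -1 * 1) / 2 = (1 - β) / 2 by ring,
      abs_of_nonneg (by linarith), abs_of_nonpos (by linarith)]; ring
  · rw [show (1 + β * 1 * -1) / 2 = (1 - β) / 2 by ring,
      show (1 + β * -1 * -1) / 2 = (1 + β) / 2 by ring,
      abs_of_nonpos (by linarith), abs_of_nonneg (by linarith)]; ring

theorem noise_L1_lower_bound (n : ℕ) (c : Finset (Fin n) → ℝ) (α : ℝ)
    (h0 : 0 < α) (h1 : α ≤ 1) :
    α ^ n * Ex (fun x => |eval' c x|)
      ≤ Ex (fun x => |eval' (fun S => α ^ S.card * c S) x|) := by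
  set β := α⁻¹ with hβdef
  have hβ1 : 1 ≤ β := by
    rw [hβdef]
    rw [le_inv_comm₀ one_pos h0] <;> simpa using h1
  set g := eval' (fun S => α ^ S.card * c S) with hg
  have kernel_sum : ∀ y : Fin n → Bool,
      ∑ x : Fin n → Bool, ∏ i, |(1 + β * sgn (x i) * sgn (y i)) / 2| = β ^ n := by
    intro y
    rw [sum_pi_prod (fun i b => |(1 + β * sgn b * sgn (y i)) / 2|)]
    have hper : ∀ i : Fin n, (|(1 + β * sgn true * sgn (y i)) / 2|
        + |(1 + β * sgn false * sgn (y i)) / 2|) = β := by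
      intro i
      have h1s : sgn true = 1 := by simp [sgn]
      have h2s : sgn false = -1 := by simp [sgn]
      rw [h1s, h2s]
      exact habs2 β (sgn (y i)) hβ1 (by cases hyi : y i <;> simp [sgn, hyi])
    rw [Finset.prod_congr rfl fun i _ => hper i, Finset.prod_const, Finset.card_univ,
      Fintype.card_fin]
  have hsum : ∑ x : Fin n → Bool, |eval' c x| ≤ β ^ n * ∑ y : Fin n → Bool, |g y| := by
    calc ∑ x : Fin n → Bool, |eval' c x|
        ≤ ∑ x : Fin n → Bool, ∑ y : Fin n → Bool,
            (∏ i, |(1 + β * sgn (x i) * sgn (y i)) / 2|) * |g y| := by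
          refine Finset.sum_le_sum fun x _ => ?_
          rw [reproduce c α h0.ne' x]
          refine (Finset.abs_sum_le_sum_abs _ _).trans ?_
          refine le_of_eq (Finset.sum_congr rfl fun y _ => ?_)
          rw [abs_mul, Finset.abs_prod]
      _ = ∑ y : Fin n → Bool,
            (∑ x : Fin n → Bool, ∏ i, |(1 + β * sgn (x i) * sgn (y i)) / 2|) * |g y| := by
          rw [Finset.sum_comm]
          exact Finset.sum_congr rfl fun y _ => by rw [Finset.sum_mul]
      _ = β ^ n * ∑ y : Fin n → Bool, |g y| := by
          rw [Finset.mul_sum]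
          exact Finset.sum_congr rfl fun y _ => by rw [kernel_sum y]
  have hab : α ^ n * β ^ n = 1 := by
    rw [← mul_pow, hβdef, mul_inv_cancel₀ h0.ne', one_pow]
  show α ^ n * ((∑ x : Fin n → Bool, |eval' c x|) / 2 ^ n)
      ≤ (∑ x : Fin n → Bool, |g x|) / 2 ^ n
  rw [← mul_div_assoc]
  gcongr
  calc α ^ n * ∑ x : Fin n → Bool, |eval' c x|
      ≤ α ^ n * (β ^ n * ∑ y : Fin n → Bool, |g y|) :=
        mul_le_mul_of_nonneg_left hsum (pow_nonneg h0.le n)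
    _ = ∑ y : Fin n → Bool, |g y| := by rw [← mul_assoc, hab, one_mul]
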